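/- Let x_1 < ... < x_k be a D-diffsequence of positive integers. Then the distinct values among pos(x_1) ≤ pos(x_2) ≤ ... ≤ pos(x_k), listed in increasing order, form a D-diffsequence; that is, consecutive distinct values of pos(x_i) differ by a power of 2. -/

import Mathlib

/-- The set of powers of two. -/
def D : Set ℕ := {d | ∃ i : ℕ, d = 2 ^ i}

/-- `pos i = ⌈i / 4⌉`. -/
def pos (i : ℕ) : ℕ := (i + 3) / 4

/-- The expansion of a binary string: each `0` becomes `0011`, each `1` becomes `1100`.
For `1 ≤ m`, `s⁽¹⁾_m = s_{⌈m/4⌉}` if `m % 4 ∈ {1,2}` and `1 - s_{⌈m/4⌉}` otherwise. -/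
def expand (s : ℕ → Fin 2) : ℕ → Fin 2 :=
  fun m => if m % 4 = 1 ∨ m % 4 = 2 then s (pos m) else 1 - s (pos m)

/-- `a 0 < a 1 < ⋯ < a (k-1)` is a `D`-diffsequence contained in `{1, …, n}`. -/
def IsDiffseqIn (n k : ℕ) (a : ℕ → ℕ) : Prop :=
  (∀ i < k, 1 ≤ a i ∧ a i ≤ n) ∧
    ∀ i, i + 1 < k → a i < a (i + 1) ∧ a (i + 1) - a i ∈ D

/-- The set of hops of a length-`k` diffsequence `a` with respect to the string `s`:
indices `j` (0-based) with `a (j+1) - a j = 1` and `s (a (j+1)) ≠ s (a j)`. -/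
def hops (s : ℕ → Fin 2) (k : ℕ) (a : ℕ → ℕ) : Finset ℕ :=
  (Finset.range (k - 1)).filter fun j => a (j + 1) = a j + 1 ∧ s (a (j + 1)) ≠ s (a j)

/-- `psi s n h` : the maximum length of a `D`-diffsequence contained in `{1, …, n}`
with at most `h` hops with respect to `s` (0 if there is none). -/
noncomputable def psi (s : ℕ → Fin 2) (n h : ℕ) : ℕ :=
  sSup {k | ∃ a : ℕ → ℕ, IsDiffseqIn n k a ∧ (hops s k a).card ≤ h}


lemma pos_step (a b : ℕ) (hab : a < b) (hd : b - a ∈ D) :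
    pos a ≤ pos b ∧ (pos a = pos b ∨ pos b - pos a ∈ D) := by
  obtain ⟨j, hj⟩ := hd
  have hb : b = a + 2 ^ j := by omega
  rcases le_or_gt j 1 with h1 | h1
  · interval_cases j
    · rw [pow_zero] at hb
      subst hb; unfold pos
      refine ⟨by omega, ?_⟩
      rcases Nat.lt_or_ge ((a + 3) / 4) ((a + 1 + 3) / 4) with h | h
      · refine Or.inr ⟨0, ?_⟩; rw [pow_zero]; omega
      · exact Or.inl (by omega)
    · rw [pow_one] at hb
      subst hb; unfold pos
      refine ⟨by omega, ?_⟩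
      rcases Nat.lt_or_ge ((a + 3) / 4) ((a + 2 + 3) / 4) with h | h
      · refine Or.inr ⟨0, ?_⟩; rw [pow_zero]; omega
      · exact Or.inl (by omega)
  · have h4 : 2 ^ j = 4 * 2 ^ (j - 2) := by
      rw [show (4 : ℕ) = 2 ^ 2 by norm_num, ← pow_add]
      congr 1; omega
    have hm : 1 ≤ 2 ^ (j - 2) := Nat.one_le_two_pow
    subst hb
    unfold pos
    rw [h4]
    constructor
    · omega
    · right
      exact ⟨j - 2, by omega⟩

lemma dedup_chain' (R : ℕ → ℕ → Prop) : ∀ l : List ℕ, l.Pairwise (· ≤ ·) →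
    l.Chain' (fun a b => a = b ∨ R a b) → l.dedup.Chain' R ∧ l.dedup.head? = l.head? := by
  intro l
  unfold List.Chain'
  induction l with
  | nil => simp
  | cons a t ih =>
    intro hp hc
    obtain ⟨c1, c2⟩ := ih (List.pairwise_cons.mp hp).2 hc.tail
    by_cases hm : a ∈ t
    · cases t with
      | nil => simp at hm
      | cons b t' =>
        have hab : a = b := by
          rcases List.mem_cons.mp hm with h | h
          · exact h
          · have h1 : a ≤ b := (List.pairwise_cons.mp hp).1 b (by simp)
            have h2 : b ≤ a := (List.pairwise_cons.mp (List.pairwise_cons.mp hp).2).1 a h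
            omega
        rw [List.dedup_cons_of_mem hm]
        exact ⟨c1, by rw [c2]; simp [hab]⟩
    · rw [List.dedup_cons_of_notMem hm]
      refine ⟨?_, by simp⟩
      rw [List.isChain_cons]
      refine ⟨?_, c1⟩
      intro y hy
      rw [c2] at hy
      cases t with
      | nil => simp at hy
      | cons b t' =>
        obtain rfl : b = y := by simpa using hy
        rcases (List.isChain_cons_cons.mp hc).1 with h | h
        · subst h; exact absurd List.mem_cons_self hm
        · exact h

theorem stmt_13 (k : ℕ) (x : ℕ → ℕ)
    (hpos : ∀ i < k, 1 ≤ x i)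
    (hdiff : ∀ i, i + 1 < k → x i < x (i + 1) ∧ x (i + 1) - x i ∈ D) :
    List.Chain' (fun a b => b - a ∈ D)
      (((Finset.range k).image fun i => pos (x i)).sort (· ≤ ·)) := by
  set f : ℕ → ℕ := fun i => pos (x i) with hf
  set L : List ℕ := (List.range k).map f with hL
  have hstep : ∀ i, i + 1 < k → f i ≤ f (i + 1) ∧ (f i = f (i + 1) ∨ f (i + 1) - f i ∈ D) := by
    intro i hi
    obtain ⟨h1, h2⟩ := hdiff i hi
    exact pos_step _ _ h1 h2
  have hchain : ∀ P : ℕ → ℕ → Prop, (∀ i, i + 1 < k → P (f i) (f (i + 1))) →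
      L.Chain' P := by
    intro P hP
    rw [hL, List.Chain', List.isChain_map]
    cases k with
    | zero => simp
    | succ n =>
      rw [List.isChain_range_succ]
      intro i hi
      exact hP i (by omega)
  have h1 : L.Chain' (· ≤ ·) := hchain _ fun i hi => (hstep i hi).1
  have h2 : L.Chain' (fun a b => a = b ∨ b - a ∈ D) := hchain _ fun i hi => (hstep i hi).2
  have hp1 : L.Pairwise (· ≤ ·) := List.isChain_iff_pairwise.mp h1
  have himg : (Finset.range k).image f = L.toFinset := by
    ext y
    simp [hL]
  have hsort : (L.toFinset.sort (· ≤ ·)) = L.dedup := by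
    refine List.Perm.eq_of_pairwise' (Finset.pairwise_sort _ _)
      (hp1.sublist L.dedup_sublist) ?_
    apply List.perm_of_nodup_nodup_toFinset_eq (Finset.sort_nodup _ _) L.nodup_dedup
    rw [Finset.sort_toFinset]; ext y; simp
  rw [himg, hsort]
  exact (dedup_chain' _ L hp1 h2).1
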